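/- arXiv:2301.13589 — 3 statements merged into one kernel-verified Lean document; each statement's English description precedes it below -/
import Mathlib

section
/- Let v ∈ ℝⁿ, ε > 0, and 1 ≤ p, q ≤ ∞ with 1/p + 1/q = 1. Define κ_q(v) := inf over ω ∈ ℝ of ‖v - ω·𝟏‖_q, where 𝟏 is the all-ones vector. Then min over c ∈ ℝⁿ with ‖c‖_p ≤ ε and ⟨c, 𝟏⟩ = 0 of ⟨c, v⟩ equals -ε · κ_q(v). -/
open scoped ENNReal

/-- The ℓ_p norm of a finite real vector for `p : ℝ≥0∞` (sup norm when `p = ∞`). -/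
noncomputable def lpnorm {n : ℕ} (p : ℝ≥0∞) (v : Fin n → ℝ) : ℝ :=
  if p = ∞ then ⨆ i, |v i| else (∑ i, |v i| ^ p.toReal) ^ (1 / p.toReal)

lemma lpnorm_one_eq {n : ℕ} (v : Fin n → ℝ) : lpnorm 1 v = ∑ i, |v i| := by
  simp [lpnorm]

lemma lpnorm_top_eq {n : ℕ} (v : Fin n → ℝ) : lpnorm ∞ v = ⨆ i, |v i| := if_pos rfl

lemma lpnorm_nonneg {n : ℕ} (p : ℝ≥0∞) (v : Fin n → ℝ) : 0 ≤ lpnorm p v := by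
  unfold lpnorm
  split
  · exact Real.iSup_nonneg fun i => abs_nonneg _
  · exact Real.rpow_nonneg
      (Finset.sum_nonneg fun i _ => Real.rpow_nonneg (abs_nonneg _) _) _

lemma lpnorm_neg {n : ℕ} (p : ℝ≥0∞) (c : Fin n → ℝ) :
    lpnorm p (fun i => -(c i)) = lpnorm p c := by
  simp only [lpnorm, abs_neg]

lemma sum_mul_sub {n : ℕ} (w v : Fin n → ℝ) (t : ℝ) :
    ∑ i, w i * (v i - t) = ∑ i, w i * v i - t * ∑ i, w i := by
  rw [Finset.mul_sum, ← Finset.sum_sub_distrib]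
  exact Finset.sum_congr rfl fun i _ => by ring

lemma conj_cases {p q : ℝ≥0∞} (hp : 1 ≤ p) (hq : 1 ≤ q) (hpq : 1 / p + 1 / q = 1) :
    (p = 1 ∧ q = ∞) ∨ (p = ∞ ∧ q = 1) ∨
      (p ≠ ∞ ∧ q ≠ ∞ ∧ Real.HolderConjugate p.toReal q.toReal) := by
  rw [one_div, one_div] at hpq
  have hp0 : p ≠ 0 := (zero_lt_one.trans_le hp).ne'
  have hq0 : q ≠ 0 := (zero_lt_one.trans_le hq).ne'
  by_cases hq' : q = ∞
  · subst hq'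
    simp only [ENNReal.inv_top, add_zero] at hpq
    left
    exact ⟨ENNReal.inv_eq_one.1 hpq, rfl⟩
  by_cases hp' : p = ∞
  · subst hp'
    simp only [ENNReal.inv_top, zero_add] at hpq
    right; left
    exact ⟨rfl, ENNReal.inv_eq_one.1 hpq⟩
  right; right
  refine ⟨hp', hq', ?_⟩
  have hp1 : p ≠ 1 := by
    rintro rfl
    simp only [inv_one] at hpq
    have hne : q⁻¹ ≠ 0 := by simpa [ENNReal.inv_eq_zero] using hq'
    exact absurd hpq (ENNReal.lt_add_right ENNReal.one_ne_top hne).ne'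
  have hplt : 1 < p := lt_of_le_of_ne hp (Ne.symm hp1)
  have h1r : 1 < p.toReal := by
    rw [← ENNReal.toReal_one]
    exact (ENNReal.toReal_lt_toReal ENNReal.one_ne_top hp').2 hplt
  have hsum : p.toReal⁻¹ + q.toReal⁻¹ = 1 := by
    have := congrArg ENNReal.toReal hpq
    rwa [ENNReal.toReal_add (by simp [hp0]) (by simp [hq0]), ENNReal.toReal_inv,
      ENNReal.toReal_inv, ENNReal.toReal_one] at this
  exact Real.holderConjugate_iff.2 ⟨h1r, hsum⟩

lemma holder {n : ℕ} {p q : ℝ≥0∞} (hp : 1 ≤ p) (hq : 1 ≤ q) (hpq : 1 / p + 1 / q = 1)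
    (f g : Fin n → ℝ) : ∑ i, f i * g i ≤ lpnorm p f * lpnorm q g := by
  have habs : ∑ i, f i * g i ≤ ∑ i, |f i| * |g i| :=
    Finset.sum_le_sum fun i _ => by rw [← abs_mul]; exact le_abs_self _
  rcases conj_cases hp hq hpq with ⟨rfl, rfl⟩ | ⟨rfl, rfl⟩ | ⟨hp', hq', hconj⟩
  · rw [lpnorm_one_eq, lpnorm_top_eq]
    refine habs.trans ?_
    rw [Finset.sum_mul]
    refine Finset.sum_le_sum fun i _ => ?_
    exact mul_le_mul_of_nonneg_left
      (le_ciSup (f := fun j => |g j|) (Set.Finite.bddAbove (Set.finite_range _)) i) (abs_nonneg _)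
  · rw [lpnorm_one_eq, lpnorm_top_eq]
    refine habs.trans ?_
    rw [Finset.mul_sum]
    refine Finset.sum_le_sum fun i _ => ?_
    exact mul_le_mul_of_nonneg_right
      (le_ciSup (f := fun j => |f j|) (Set.Finite.bddAbove (Set.finite_range _)) i) (abs_nonneg _)
  · unfold lpnorm
    rw [if_neg hp', if_neg hq']
    exact Real.inner_le_Lp_mul_Lq Finset.univ f g hconj

lemma mem_one_top {n : ℕ} (v : Fin n → ℝ) {ε : ℝ} (hε : 0 < ε) :
    ∃ (ω₀ : ℝ) (c : Fin n → ℝ), lpnorm 1 c ≤ ε ∧ (∑ i, c i) = 0 ∧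
      ∑ i, c i * v i = -ε * lpnorm ∞ (fun i => v i - ω₀) := by
  rcases Nat.eq_zero_or_pos n with rfl | hn
  · refine ⟨0, 0, ?_, by simp, ?_⟩
    · simp [lpnorm_one_eq, hε.le]
    · rw [lpnorm_top_eq, Real.iSup_of_isEmpty]
      simp
  haveI : Nonempty (Fin n) := ⟨⟨0, hn⟩⟩
  obtain ⟨iM, hiM⟩ := Finite.exists_max v
  obtain ⟨im, him⟩ := Finite.exists_min v
  set M := v iM with hM
  set m := v im with hm
  have hmM : m ≤ M := him iM
  set ω₀ := (M + m) / 2 with hω₀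
  have hK : lpnorm ∞ (fun i => v i - ω₀) = (M - m) / 2 := by
    rw [lpnorm_top_eq]
    apply le_antisymm
    · refine ciSup_le fun i => ?_
      rw [abs_le]
      constructor
      · have := him i; simp only [hω₀]; linarith
      · have := hiM i; simp only [hω₀]; linarith
    · have h := le_ciSup (f := fun i => |v i - ω₀|)
        (Set.Finite.bddAbove (Set.finite_range _)) iM
      have : |v iM - ω₀| = (M - m) / 2 := by
        rw [abs_of_nonneg (by simp only [hω₀]; linarith)]
        simp only [hω₀, ← hM]; ring
      linarith
  by_cases hMm : M = m
  · refine ⟨ω₀, 0, by simp [lpnorm_one_eq, hε.le], by simp, ?_⟩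
    rw [hK, hMm]
    simp
  · have hne : im ≠ iM := fun h => hMm (by rw [hM, hm, h])
    refine ⟨ω₀, fun i => (if i = im then ε / 2 else 0) + (if i = iM then -(ε / 2) else 0),
      ?_, ?_, ?_⟩
    · rw [lpnorm_one_eq]
      have key : ∀ i : Fin n,
          |(if i = im then ε / 2 else 0) + (if i = iM then -(ε / 2) else 0)|
            = (if i = im then ε / 2 else 0) + (if i = iM then ε / 2 else 0) := by
        intro i
        by_cases h1 : i = im <;> by_cases h2 : i = iM
        · exact absurd (h1 ▸ h2) hne
        · simp [h1, h2, hne, abs_of_pos, half_pos hε]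
        · simp [h1, h2, Ne.symm hne, abs_of_nonpos, (half_pos hε).le]
        · simp [h1, h2]
      rw [Finset.sum_congr rfl fun i _ => key i, Finset.sum_add_distrib,
        Finset.sum_ite_eq' Finset.univ im, Finset.sum_ite_eq' Finset.univ iM]
      simp
    · rw [Finset.sum_add_distrib, Finset.sum_ite_eq' Finset.univ im,
        Finset.sum_ite_eq' Finset.univ iM]
      simp
    · rw [hK]
      have : ∀ i : Fin n,
          ((if i = im then ε / 2 else 0) + (if i = iM then -(ε / 2) else 0)) * v i
            = (if i = im then (ε / 2) * v i else 0) + (if i = iM then -(ε / 2) * v i else 0) := by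
        intro i; by_cases h1 : i = im <;> by_cases h2 : i = iM <;>
          simp [h1, h2, hne, Ne.symm hne] <;> ring
      rw [Finset.sum_congr rfl fun i _ => this i, Finset.sum_add_distrib,
        Finset.sum_ite_eq' Finset.univ im, Finset.sum_ite_eq' Finset.univ iM]
      simp [← hM, ← hm]
      ring

open scoped Classical in
lemma mem_top_one {n : ℕ} (v : Fin n → ℝ) {ε : ℝ} (hε : 0 < ε) :
    ∃ (ω₀ : ℝ) (c : Fin n → ℝ), lpnorm ∞ c ≤ ε ∧ (∑ i, c i) = 0 ∧
      ∑ i, c i * v i = -ε * lpnorm 1 (fun i => v i - ω₀) := by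
  rcases Nat.eq_zero_or_pos n with rfl | hn
  · refine ⟨0, 0, ?_, by simp, by simp [lpnorm_one_eq]⟩
    rw [lpnorm_top_eq]
    simp only [Pi.zero_apply, abs_zero]
    rw [Real.iSup_of_isEmpty]
    exact hε.le
  haveI : Nonempty (Fin n) := ⟨⟨0, hn⟩⟩
  set img : Finset ℝ := Finset.univ.image v with himg_def
  have himg : img.Nonempty := ⟨v ⟨0, hn⟩, Finset.mem_image_of_mem v (Finset.mem_univ _)⟩
  set T : Finset ℝ :=
    img.filter (fun t => n ≤ 2 * (Finset.univ.filter (fun i => v i ≤ t)).card) with hT_def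
  have hT : T.Nonempty := by
    refine ⟨img.max' himg, Finset.mem_filter.2 ⟨img.max'_mem himg, ?_⟩⟩
    have : (Finset.univ.filter (fun i => v i ≤ img.max' himg)) = Finset.univ := by
      refine Finset.filter_true_of_mem fun i _ => ?_
      exact img.le_max' _ (Finset.mem_image_of_mem v (Finset.mem_univ _))
    rw [this, Finset.card_univ, Fintype.card_fin]
    omega
  set ω₀ := T.min' hT with hω₀_def
  have hω₀T : ω₀ ∈ T := T.min'_mem hT
  have hω₀img : ω₀ ∈ img := (Finset.mem_filter.1 hω₀T).1
  set A := (Finset.univ.filter (fun i => v i < ω₀)).card with hA_def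
  set B := (Finset.univ.filter (fun i => ω₀ < v i)).card with hB_def
  set E := (Finset.univ.filter (fun i => v i = ω₀)).card with hE_def
  -- E ≥ 1
  have hE1 : 1 ≤ E := by
    obtain ⟨i₀, -, hi₀⟩ := Finset.mem_image.1 hω₀img
    refine Finset.card_pos.2 ⟨i₀, Finset.mem_filter.2 ⟨Finset.mem_univ _, hi₀⟩⟩
  -- A + B + E = n
  have hABE : A + B + E = n := by
    have h1 := Finset.card_filter_add_card_filter_not
      (s := Finset.univ (α := Fin n)) (p := fun i => v i < ω₀)
    have h2 := Finset.card_filter_add_card_filter_not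
      (s := Finset.univ.filter (fun i => ¬ v i < ω₀)) (p := fun i => ω₀ < v i)
    have e1 : (Finset.univ.filter (fun i => ¬ v i < ω₀)).filter (fun i => ω₀ < v i)
        = Finset.univ.filter (fun i => ω₀ < v i) := by
      rw [Finset.filter_filter]
      apply Finset.filter_congr
      intro i _
      constructor
      · rintro ⟨-, h⟩; exact h
      · intro h; exact ⟨not_lt.2 h.le, h⟩
    have e2 : (Finset.univ.filter (fun i => ¬ v i < ω₀)).filter (fun i => ¬ ω₀ < v i)
        = Finset.univ.filter (fun i => v i = ω₀) := by
      rw [Finset.filter_filter]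
      apply Finset.filter_congr
      intro i _
      constructor
      · rintro ⟨h1, h2⟩; exact le_antisymm (not_lt.1 h2) (not_lt.1 h1)
      · intro h; constructor <;> simp [h]
    rw [e1, e2] at h2
    rw [Finset.card_univ, Fintype.card_fin] at h1
    omega
  -- 2B ≤ n
  have hB2 : 2 * B ≤ n := by
    have hmem := (Finset.mem_filter.1 hω₀T).2
    have h1 := Finset.card_filter_add_card_filter_not
      (s := Finset.univ (α := Fin n)) (p := fun i => v i ≤ ω₀)
    have e1 : Finset.univ.filter (fun i => ¬ v i ≤ ω₀) = Finset.univ.filter (fun i => ω₀ < v i) := by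
      apply Finset.filter_congr; intro i _; simp [not_le]
    rw [e1, Finset.card_univ, Fintype.card_fin] at h1
    omega
  -- 2A ≤ n
  have hA2 : 2 * A ≤ n := by
    by_cases hA0 : A = 0
    · omega
    have hAne : (Finset.univ.filter (fun i => v i < ω₀)).Nonempty :=
      Finset.card_pos.1 (Nat.pos_of_ne_zero hA0)
    obtain ⟨j, hj⟩ := hAne
    have hjlt : v j < ω₀ := (Finset.mem_filter.1 hj).2
    set Aset : Finset ℝ := img.filter (fun t => t < ω₀) with hAset_def
    have hAsetne : Aset.Nonempty :=
      ⟨v j, Finset.mem_filter.2 ⟨Finset.mem_image_of_mem v (Finset.mem_univ _), hjlt⟩⟩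
    set t' := Aset.max' hAsetne with ht'_def
    have ht'mem : t' ∈ Aset := Aset.max'_mem hAsetne
    have ht'img : t' ∈ img := (Finset.mem_filter.1 ht'mem).1
    have ht'lt : t' < ω₀ := (Finset.mem_filter.1 ht'mem).2
    have ht'T : t' ∉ T := fun h => absurd (T.min'_le t' h) (not_le.2 ht'lt)
    have hnot : ¬ (n ≤ 2 * (Finset.univ.filter (fun i => v i ≤ t')).card) := by
      intro h
      exact ht'T (Finset.mem_filter.2 ⟨ht'img, h⟩)
    have heq : Finset.univ.filter (fun i => v i < ω₀)
        = Finset.univ.filter (fun i => v i ≤ t') := by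
      apply Finset.filter_congr
      intro i _
      constructor
      · intro h
        exact Aset.le_max' _ (Finset.mem_filter.2
          ⟨Finset.mem_image_of_mem v (Finset.mem_univ _), h⟩)
      · intro h; exact lt_of_le_of_lt h ht'lt
    rw [hA_def, heq]
    omega
  -- construction
  have hEpos : (0:ℝ) < (E : ℝ) := by exact_mod_cast hE1
  have hBA : |(B : ℝ) - (A : ℝ)| ≤ (E : ℝ) := by
    rw [abs_le]
    constructor
    · have : A ≤ B + E := by omega
      have := (Nat.cast_le (α := ℝ)).2 this
      push_cast at this ⊢
      linarith
    · have : B ≤ A + E := by omega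
      have := (Nat.cast_le (α := ℝ)).2 this
      push_cast at this ⊢
      linarith
  set d := ε * ((B : ℝ) - (A : ℝ)) / (E : ℝ) with hd_def
  have hd : |d| ≤ ε := by
    rw [hd_def, abs_div, abs_mul, abs_of_pos hε, abs_of_pos hEpos, div_le_iff₀ hEpos]
    calc ε * |(B:ℝ) - (A:ℝ)| ≤ ε * E := mul_le_mul_of_nonneg_left hBA hε.le
    _ = ε * E := rfl
  set c : Fin n → ℝ := fun i => if ω₀ < v i then -ε else if v i < ω₀ then ε else d with hc_def
  have hsum : ∑ i, c i = 0 := by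
    rw [← Finset.sum_filter_add_sum_filter_not Finset.univ (fun i => ω₀ < v i),
      ← Finset.sum_filter_add_sum_filter_not
        (Finset.univ.filter (fun i => ¬ ω₀ < v i)) (fun i => v i < ω₀)]
    have e1 : ∑ i ∈ Finset.univ.filter (fun i => ω₀ < v i), c i = (B : ℝ) * (-ε) := by
      rw [Finset.sum_congr rfl (fun i hi => ?_), Finset.sum_const, nsmul_eq_mul]
      simp [hc_def, (Finset.mem_filter.1 hi).2]
    have e2set : (Finset.univ.filter (fun i => ¬ ω₀ < v i)).filter (fun i => v i < ω₀)
        = Finset.univ.filter (fun i => v i < ω₀) := by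
      rw [Finset.filter_filter]
      apply Finset.filter_congr; intro i _
      constructor
      · rintro ⟨-, h⟩; exact h
      · intro h; exact ⟨not_lt.2 h.le, h⟩
    have e2 : ∑ i ∈ (Finset.univ.filter (fun i => ¬ ω₀ < v i)).filter (fun i => v i < ω₀), c i
        = (A : ℝ) * ε := by
      rw [e2set, Finset.sum_congr rfl (fun i hi => ?_), Finset.sum_const, nsmul_eq_mul]
      have h2 := (Finset.mem_filter.1 hi).2
      simp [hc_def, h2, asymm h2]
    have e3set : (Finset.univ.filter (fun i => ¬ ω₀ < v i)).filter (fun i => ¬ v i < ω₀)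
        = Finset.univ.filter (fun i => v i = ω₀) := by
      rw [Finset.filter_filter]
      apply Finset.filter_congr; intro i _
      constructor
      · rintro ⟨h1, h2⟩; exact le_antisymm (not_lt.1 h1) (not_lt.1 h2)
      · intro h; constructor <;> simp [h]
    have e3 : ∑ i ∈ (Finset.univ.filter (fun i => ¬ ω₀ < v i)).filter (fun i => ¬ v i < ω₀), c i
        = (E : ℝ) * d := by
      rw [e3set, Finset.sum_congr rfl (fun i hi => ?_), Finset.sum_const, nsmul_eq_mul]
      have h2 := (Finset.mem_filter.1 hi).2
      simp [hc_def, h2]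
    rw [e1, e2, e3, hd_def, mul_comm ((E:ℕ):ℝ), div_mul_cancel₀ _ hEpos.ne']
    ring
  refine ⟨ω₀, c, ?_, hsum, ?_⟩
  · rw [lpnorm_top_eq]
    refine ciSup_le fun i => ?_
    rw [hc_def]
    dsimp only
    split_ifs with h1 h2
    · rw [abs_neg, abs_of_pos hε]
    · rw [abs_of_pos hε]
    · exact hd
  · have key : ∀ i, c i * (v i - ω₀) = -ε * |v i - ω₀| := by
      intro i
      rw [hc_def]
      dsimp only
      split_ifs with h1 h2
      · rw [abs_of_pos (sub_pos.2 h1)]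
      · rw [abs_of_neg (sub_neg.2 h2)]
        ring
      · have hvi : v i = ω₀ := le_antisymm (not_lt.1 h1) (not_lt.1 h2)
        rw [hvi]
        simp
    have := sum_mul_sub c v ω₀
    rw [hsum, mul_zero, sub_zero] at this
    rw [← this, Finset.sum_congr rfl fun i _ => key i, lpnorm_one_eq, ← Finset.mul_sum]

lemma sign_mul_self_eq_abs (x : ℝ) : Real.sign x * x = |x| := by
  rcases lt_trichotomy x 0 with h | h | h
  · rw [Real.sign_of_neg h, abs_of_neg h]; ring
  · simp [h]
  · rw [Real.sign_of_pos h, abs_of_pos h]; ring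

lemma abs_sign_le_one (x : ℝ) : |Real.sign x| ≤ 1 := by
  rcases Real.sign_apply_eq x with h | h | h <;> rw [h] <;> norm_num

lemma phi_cont {s : ℝ} (hs : 1 < s) :
    Continuous (fun x : ℝ => Real.sign x * |x| ^ (s - 1)) := by
  rw [continuous_iff_continuousAt]
  intro x
  rcases lt_trichotomy x 0 with hx | hx | hx
  · have hcont : ContinuousAt (fun y : ℝ => -(|y| ^ (s - 1))) x :=
      (((Real.continuousAt_rpow_const _ _
        (Or.inl (abs_ne_zero.2 hx.ne))).comp continuous_abs.continuousAt)).neg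
    apply hcont.congr
    filter_upwards [Iio_mem_nhds hx] with y hy
    rw [Real.sign_of_neg hy]; ring
  · subst hx
    rw [ContinuousAt]
    have h0 : Real.sign 0 * |(0:ℝ)| ^ (s - 1) = 0 := by simp [Real.sign_zero]
    rw [h0]
    apply squeeze_zero_norm (a := fun y : ℝ => |y| ^ (s - 1))
    · intro y
      rw [Real.norm_eq_abs, abs_mul, abs_of_nonneg (Real.rpow_nonneg (abs_nonneg _) _)]
      exact mul_le_of_le_one_left (Real.rpow_nonneg (abs_nonneg _) _) (abs_sign_le_one y)
    · have hco : ContinuousAt (fun y : ℝ => |y| ^ (s - 1)) 0 :=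
        (Real.continuousAt_rpow_const _ _ (Or.inr (by linarith))).comp
          continuous_abs.continuousAt
      have := hco.tendsto
      rwa [show |(0:ℝ)| ^ (s - 1) = 0 by
        rw [abs_zero, Real.zero_rpow (by linarith : s - 1 ≠ 0)]] at this
  · have hcont : ContinuousAt (fun y : ℝ => |y| ^ (s - 1)) x :=
      (Real.continuousAt_rpow_const _ _ (Or.inl (abs_ne_zero.2 hx.ne'))).comp
        continuous_abs.continuousAt
    apply hcont.congr
    filter_upwards [Ioi_mem_nhds hx] with y hy
    rw [Real.sign_of_pos hy, one_mul]

lemma phi_mul_self {s : ℝ} (hs : 1 < s) (x : ℝ) :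
    (Real.sign x * |x| ^ (s - 1)) * x = |x| ^ s := by
  by_cases hx : x = 0
  · subst hx
    rw [abs_zero, Real.zero_rpow (by linarith : s - 1 ≠ 0),
      Real.zero_rpow (by linarith : s ≠ 0)]
    ring
  · have : (Real.sign x * |x| ^ (s - 1)) * x = |x| ^ (s - 1) * (Real.sign x * x) := by ring
    rw [this, sign_mul_self_eq_abs, ← Real.rpow_add_one (abs_ne_zero.2 hx), sub_add_cancel]

lemma abs_phi {s : ℝ} (hs : 1 < s) (x : ℝ) :
    |Real.sign x * |x| ^ (s - 1)| = |x| ^ (s - 1) := by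
  by_cases hx : x = 0
  · subst hx
    rw [abs_zero, Real.zero_rpow (by linarith : s - 1 ≠ 0)]
    simp [Real.sign_zero]
  · rcases Real.sign_apply_eq_of_ne_zero x hx with h | h <;>
      rw [abs_mul, h, abs_of_nonneg (Real.rpow_nonneg (abs_nonneg _) _)] <;> norm_num

lemma phi_nonneg {s : ℝ} (hs : 1 < s) {x : ℝ} (hx : 0 ≤ x) :
    0 ≤ Real.sign x * |x| ^ (s - 1) := by
  rcases hx.eq_or_lt with h | h
  · simp [← h, Real.sign_zero]
  · rw [Real.sign_of_pos h, one_mul]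
    exact Real.rpow_nonneg (abs_nonneg _) _

lemma phi_nonpos {s : ℝ} (hs : 1 < s) {x : ℝ} (hx : x ≤ 0) :
    Real.sign x * |x| ^ (s - 1) ≤ 0 := by
  rcases hx.lt_or_eq with h | h
  · rw [Real.sign_of_neg h, neg_one_mul]
    exact neg_nonpos.2 (Real.rpow_nonneg (abs_nonneg _) _)
  · simp [h, Real.sign_zero]

lemma mem_finite {n : ℕ} (v : Fin n → ℝ) {ε : ℝ} (hε : 0 < ε) {p q : ℝ≥0∞}
    (hp' : p ≠ ∞) (hq' : q ≠ ∞) (hc : Real.HolderConjugate p.toReal q.toReal) :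
    ∃ (ω₀ : ℝ) (c : Fin n → ℝ), lpnorm p c ≤ ε ∧ (∑ i, c i) = 0 ∧
      ∑ i, c i * v i = -ε * lpnorm q (fun i => v i - ω₀) := by
  set r := p.toReal with hr_def
  set s := q.toReal with hs_def
  have hr1 : 1 < r := hc.lt
  have hs1 : 1 < s := hc.symm.lt
  have hr0 : r ≠ 0 := by linarith
  have hs0 : s ≠ 0 := by linarith
  have hsr : (s - 1) * r = s := by
    have h := hc.inv_add_inv_eq_one
    have hrne : r ≠ 0 := hr0
    have hsne : s ≠ 0 := hs0
    field_simp at h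
    nlinarith [h]
  have hlp : ∀ m : ℕ, ∀ w : Fin m → ℝ,
      lpnorm p w = (∑ i, |w i| ^ r) ^ (1 / r) := fun m w => if_neg hp'
  have hlq : ∀ m : ℕ, ∀ w : Fin m → ℝ,
      lpnorm q w = (∑ i, |w i| ^ s) ^ (1 / s) := fun m w => if_neg hq'
  rcases Nat.eq_zero_or_pos n with rfl | hn
  · refine ⟨0, 0, ?_, by simp, ?_⟩
    · rw [hlp]
      simp only [Pi.zero_apply, abs_zero, Finset.univ_eq_empty, Finset.sum_empty]
      rw [Real.zero_rpow (one_div_ne_zero hr0)]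
      exact hε.le
    · rw [hlq]
      simp only [Finset.univ_eq_empty, Finset.sum_empty, Pi.zero_apply, zero_mul]
      rw [Real.zero_rpow (one_div_ne_zero hs0)]
      simp
  haveI : Nonempty (Fin n) := ⟨⟨0, hn⟩⟩
  set F : ℝ → ℝ := fun ω => ∑ i, Real.sign (v i - ω) * |v i - ω| ^ (s - 1) with hF_def
  have hFcont : Continuous F :=
    continuous_finset_sum _ (fun i _ =>
      (phi_cont hs1).comp (continuous_const.sub continuous_id))
  obtain ⟨im, hm⟩ := Finite.exists_min v
  obtain ⟨iM, hM⟩ := Finite.exists_max v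
  have hab : v im ≤ v iM := hm iM
  have hha : 0 ≤ F (v im) :=
    Finset.sum_nonneg fun i _ => phi_nonneg hs1 (sub_nonneg.2 (hm i))
  have hhb : F (v iM) ≤ 0 :=
    Finset.sum_nonpos fun i _ => phi_nonpos hs1 (sub_nonpos.2 (hM i))
  obtain ⟨ω₀, -, hω₀⟩ :=
    intermediate_value_Icc' hab hFcont.continuousOn (Set.mem_Icc.2 ⟨hhb, hha⟩)
  have hω₀' : ∑ i, Real.sign (v i - ω₀) * |v i - ω₀| ^ (s - 1) = 0 := hω₀
  set A := ∑ i, |v i - ω₀| ^ s with hA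
  have hA0 : 0 ≤ A :=
    Finset.sum_nonneg fun i _ => Real.rpow_nonneg (abs_nonneg _) _
  by_cases hAz : A = 0
  · refine ⟨ω₀, 0, ?_, by simp, ?_⟩
    · rw [hlp]
      simp only [Pi.zero_apply, abs_zero]
      rw [Real.zero_rpow hr0]
      simp only [Finset.sum_const, smul_zero]
      rw [Real.zero_rpow (one_div_ne_zero hr0)]
      exact hε.le
    · rw [hlq, ← hA, hAz]
      simp only [Pi.zero_apply, zero_mul, Finset.sum_const, smul_zero]
      rw [Real.zero_rpow (one_div_ne_zero hs0)]
      simp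
  · have hApos : 0 < A := hA0.lt_of_ne (Ne.symm hAz)
    set K := A ^ (1 / s) with hK
    have hKpos : 0 < K := Real.rpow_pos_of_pos hApos _
    have hKs : K ^ s = A := by
      rw [hK, ← Real.rpow_mul hA0, one_div, inv_mul_cancel₀ hs0, Real.rpow_one]
    have hKsne : K ^ (s - 1) ≠ 0 := (Real.rpow_pos_of_pos hKpos _).ne'
    have hKK : K ^ (s - 1) * K = A := by
      rw [← Real.rpow_add_one hKpos.ne' (s - 1), sub_add_cancel, hKs]
    set c : Fin n → ℝ :=
      fun i => -ε * (Real.sign (v i - ω₀) * |v i - ω₀| ^ (s - 1)) / K ^ (s - 1) with hc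
    have hsum : ∑ i, c i = 0 := by
      have e : ∀ i : Fin n,
          c i = (-ε / K ^ (s - 1)) * (Real.sign (v i - ω₀) * |v i - ω₀| ^ (s - 1)) :=
        fun i => by rw [hc]; ring
      rw [Finset.sum_congr rfl fun i _ => e i, ← Finset.mul_sum, hω₀', mul_zero]
    refine ⟨ω₀, c, ?_, hsum, ?_⟩
    · -- norm bound
      have habs : ∀ i, |c i| = ε * |v i - ω₀| ^ (s - 1) / K ^ (s - 1) := by
        intro i
        rw [hc]
        dsimp only
        rw [abs_div, abs_mul, abs_neg, abs_of_pos hε, abs_phi hs1,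
          abs_of_pos (Real.rpow_pos_of_pos hKpos _)]
      have e : ∀ i : Fin n, |c i| ^ r = (ε ^ r / K ^ s) * |v i - ω₀| ^ s := by
        intro i
        rw [habs i, Real.div_rpow (by positivity) (Real.rpow_nonneg hKpos.le _),
          Real.mul_rpow hε.le (Real.rpow_nonneg (abs_nonneg _) _),
          ← Real.rpow_mul (abs_nonneg _), ← Real.rpow_mul hKpos.le, hsr]
        ring
      have hsumr : ∑ i, |c i| ^ r = ε ^ r := by
        rw [Finset.sum_congr rfl fun i _ => e i, ← Finset.mul_sum, ← hA, hKs,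
          div_mul_cancel₀ _ hApos.ne']
      rw [hlp, hsumr, ← Real.rpow_mul hε.le, mul_one_div, div_self hr0, Real.rpow_one]
    · -- value
      have h1 : ∀ i : Fin n, c i * (v i - ω₀) = (-ε / K ^ (s - 1)) * |v i - ω₀| ^ s := by
        intro i
        calc c i * (v i - ω₀)
            = (-ε / K ^ (s - 1)) *
              ((Real.sign (v i - ω₀) * |v i - ω₀| ^ (s - 1)) * (v i - ω₀)) := by
              rw [hc]; ring
          _ = (-ε / K ^ (s - 1)) * |v i - ω₀| ^ s := by rw [phi_mul_self hs1]
      have h2 : ∑ i, c i * (v i - ω₀) = -ε * K := by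
        rw [Finset.sum_congr rfl fun i _ => h1 i, ← Finset.mul_sum, ← hA, ← hKK,
          div_mul_eq_mul_div, mul_comm (K ^ (s - 1)) K, ← mul_assoc, mul_div_assoc,
          div_self hKsne, mul_one]
      have h3 := sum_mul_sub c v ω₀
      rw [hsum, mul_zero, sub_zero] at h3
      rw [← h3, h2, hlq, ← hA, ← hK]

theorem stmt1 {n : ℕ} (v : Fin n → ℝ) (ε : ℝ) (hε : 0 < ε) (p q : ℝ≥0∞)
    (hp : 1 ≤ p) (hq : 1 ≤ q) (hpq : 1 / p + 1 / q = 1) :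
    IsLeast {x : ℝ | ∃ c : Fin n → ℝ, lpnorm p c ≤ ε ∧ (∑ i, c i) = 0 ∧ x = ∑ i, c i * v i}
      (-ε * ⨅ ω : ℝ, lpnorm q fun i => v i - ω) := by
  have hf0 : ∀ ω : ℝ, 0 ≤ lpnorm q fun i => v i - ω := fun ω => lpnorm_nonneg _ _
  have hbdd : BddBelow (Set.range fun ω : ℝ => lpnorm q fun i => v i - ω) := by
    refine ⟨0, ?_⟩
    rintro x ⟨ω, rfl⟩
    exact hf0 ω
  have lb : ∀ x ∈ {x : ℝ | ∃ c : Fin n → ℝ,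
      lpnorm p c ≤ ε ∧ (∑ i, c i) = 0 ∧ x = ∑ i, c i * v i},
      -ε * (⨅ ω : ℝ, lpnorm q fun i => v i - ω) ≤ x := by
    rintro x ⟨c, hc1, hc2, rfl⟩
    rw [neg_mul, neg_le, ← div_le_iff₀' hε]
    refine le_ciInf fun ω => ?_
    rw [div_le_iff₀ hε, mul_comm]
    have hH := holder hp hq hpq (fun i => -(c i)) (fun i => v i - ω)
    rw [lpnorm_neg] at hH
    have hL : ∑ i, -(c i) * (v i - ω) = -(∑ i, c i * v i) := by
      have := sum_mul_sub c v ω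
      rw [hc2, mul_zero, sub_zero] at this
      rw [← this, ← Finset.sum_neg_distrib]
      exact Finset.sum_congr rfl fun i _ => by ring
    rw [hL] at hH
    refine hH.trans ?_
    exact mul_le_mul_of_nonneg_right hc1 (hf0 ω)
  have hmem : ∃ ω₀ : ℝ, ∃ c : Fin n → ℝ, lpnorm p c ≤ ε ∧ (∑ i, c i) = 0 ∧
      ∑ i, c i * v i = -ε * lpnorm q (fun i => v i - ω₀) := by
    rcases conj_cases hp hq hpq with ⟨rfl, rfl⟩ | ⟨rfl, rfl⟩ | ⟨hp', hq', hconj⟩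
    · exact mem_one_top v hε
    · exact mem_top_one v hε
    · exact mem_finite v hε hp' hq' hconj
  obtain ⟨ω₀, c, h1, h2, h3⟩ := hmem
  have hx : -ε * lpnorm q (fun i => v i - ω₀) ∈ {x : ℝ | ∃ c : Fin n → ℝ,
      lpnorm p c ≤ ε ∧ (∑ i, c i) = 0 ∧ x = ∑ i, c i * v i} := ⟨c, h1, h2, h3.symm⟩
  have h4 := lb _ hx
  rw [neg_mul, neg_mul, neg_le_neg_iff] at h4
  have h5 : lpnorm q (fun i => v i - ω₀) ≤ ⨅ ω : ℝ, lpnorm q fun i => v i - ω :=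
    le_of_mul_le_mul_left h4 hε
  have h6 : (⨅ ω : ℝ, lpnorm q fun i => v i - ω) ≤ lpnorm q (fun i => v i - ω₀) :=
    ciInf_le hbdd ω₀
  have heq : (⨅ ω : ℝ, lpnorm q fun i => v i - ω) = lpnorm q (fun i => v i - ω₀) :=
    le_antisymm h6 h5
  constructor
  · rw [heq]
    exact hx
  · exact lb
end

section
/- Let v ∈ ℝⁿ, let P₀(·|s,a) ∈ Δⁿ, R₀(s,a) ∈ ℝ, and α, β ≥ 0, and 1 < p < ∞ with conjugate q. Then min over (r, p̂) with |r| ≤ α, p̂ ∈ ℝⁿ, ⟨p̂, 𝟏⟩ = 0, ‖p̂‖_p ≤ β of [R₀(s,a) + r + γ⟨P₀(·|s,a) + p̂, v⟩] equals R₀(s,a) + γ⟨P₀(·|s,a), v⟩ - α - γβ·κ_q(v), where κ_q(v) = min_{ω∈ℝ}‖v - ω·𝟏‖_q. -/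
/-- The ℓ_p norm of a finite real vector, for a real exponent `p`. -/
noncomputable def pnorm {n : ℕ} (p : ℝ) (v : Fin n → ℝ) : ℝ :=
  (∑ i, |v i| ^ p) ^ (1 / p)

open Real Finset Filter

private lemma hasDerivAt_abs_rpow' {q : ℝ} (hq : 1 < q) (t : ℝ) :
    HasDerivAt (fun s : ℝ => |s| ^ q) (q * (SignType.sign t : ℝ) * |t| ^ (q - 1)) t := by
  have hq0 : (0:ℝ) < q := by linarith
  rcases lt_trichotomy t 0 with ht | rfl | ht
  · have h1 : HasDerivAt (fun s : ℝ => (-s) ^ q) (q * (-t) ^ (q - 1) * (-1)) t :=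
      (Real.hasDerivAt_rpow_const (p := q) (Or.inl (by linarith : -t ≠ 0))).comp t
        (hasDerivAt_neg t)
    have h2 : (fun s : ℝ => |s| ^ q) =ᶠ[nhds t] fun s => (-s) ^ q := by
      filter_upwards [Iio_mem_nhds ht] with s hs
      rw [abs_of_neg hs]
    have := h1.congr_of_eventuallyEq h2
    rw [sign_neg ht, abs_of_neg ht, SignType.coe_neg_one]
    exact this.congr_deriv (by ring)
  · rw [_root_.sign_zero, SignType.coe_zero, mul_zero, zero_mul]
    rw [hasDerivAt_iff_tendsto_slope]
    apply squeeze_zero_norm' (a := fun s : ℝ => |s| ^ (q - 1))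
    · filter_upwards [self_mem_nhdsWithin] with s hs
      have hs0 : s ≠ 0 := hs
      rw [slope_def_field]
      rw [abs_zero, Real.zero_rpow hq0.ne', sub_zero, sub_zero]
      rw [Real.norm_eq_abs, abs_div, abs_of_nonneg (Real.rpow_nonneg (abs_nonneg _) _),
        ← Real.rpow_sub_one (abs_ne_zero.2 hs0)]
    · have hc : Continuous fun s : ℝ => |s| ^ (q - 1) :=
        continuous_abs.rpow_const fun _ => Or.inr (by linarith)
      have := hc.tendsto 0
      rw [abs_zero, Real.zero_rpow (by linarith : q - 1 ≠ 0)] at this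
      exact this.mono_left nhdsWithin_le_nhds
  · have h1 : HasDerivAt (fun s : ℝ => s ^ q) (q * t ^ (q - 1)) t :=
      Real.hasDerivAt_rpow_const (p := q) (Or.inl ht.ne')
    have h2 : (fun s : ℝ => |s| ^ q) =ᶠ[nhds t] fun s => s ^ q := by
      filter_upwards [Ioi_mem_nhds ht] with s hs
      rw [abs_of_pos hs]
    have := h1.congr_of_eventuallyEq h2
    rw [sign_pos ht, abs_of_pos ht, SignType.coe_one]
    exact this.congr_deriv (by ring)

theorem stmt15 {n : ℕ} (v P0 : Fin n → ℝ) (hP0 : ∀ i, 0 ≤ P0 i) (hPs : ∑ i, P0 i = 1)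
    (R0 : ℝ) (γ α β : ℝ) (hγ : 0 ≤ γ) (hα : 0 ≤ α) (hβ : 0 ≤ β)
    (p q : ℝ) (hp : 1 < p) (hpq : 1 / p + 1 / q = 1) :
    IsLeast {x : ℝ | ∃ r : ℝ, ∃ ph : Fin n → ℝ, |r| ≤ α ∧ (∑ i, ph i) = 0 ∧
        pnorm p ph ≤ β ∧ x = R0 + r + γ * ∑ i, (P0 i + ph i) * v i}
      (R0 + γ * (∑ i, P0 i * v i) - α - γ * β * ⨅ ω : ℝ, pnorm q fun i => v i - ω) := by
  have hn : n ≠ 0 := by rintro rfl; simp at hPs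
  haveI : NeZero n := ⟨hn⟩
  have hp0 : (0:ℝ) < p := by linarith
  have h1p : 0 < 1/p := by positivity
  have h1q : 0 < 1/q := by linarith [(div_lt_one hp0).mpr hp]
  have hq0 : (0:ℝ) < q := one_div_pos.mp h1q
  have hq : 1 < q := by
    have : 1/q < 1 := by linarith
    exact (div_lt_one hq0).mp this
  have hpq' : Real.HolderConjugate p q := Real.holderConjugate_iff.mpr ⟨hp, by simpa [one_div] using hpq⟩
  have hpqm : p + q = p * q := by
    field_simp at hpq
    linarith
  have hqp : (q - 1) * p = q := by linear_combination -hpqm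
  -- the objective for the inner minimization over ω
  set g : ℝ → ℝ := fun ω => ∑ i, |v i - ω| ^ q with hg
  have hgc : Continuous g :=
    continuous_finset_sum _ fun i _ =>
      (continuous_const.sub continuous_id).abs.rpow_const fun _ => Or.inr hq0.le
  -- existence of a global minimizer
  have hne : (Finset.univ : Finset (Fin n)).Nonempty := Finset.univ_nonempty
  set A := Finset.univ.inf' hne v with hA
  set B := Finset.univ.sup' hne v with hB
  have hAB : A ≤ B := le_trans (Finset.inf'_le _ (Finset.mem_univ ⟨0, Nat.pos_of_ne_zero hn⟩))
    (Finset.le_sup' _ (Finset.mem_univ _))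
  obtain ⟨ω₀, hω₀mem, hω₀⟩ :=
    (isCompact_Icc (a := A) (b := B)).exists_isMinOn (Set.nonempty_Icc.2 hAB) hgc.continuousOn
  have hmono : ∀ ω₁ ω₂ : ℝ, (∀ i, |v i - ω₁| ≤ |v i - ω₂|) → g ω₁ ≤ g ω₂ := by
    intro ω₁ ω₂ h
    exact Finset.sum_le_sum fun i _ => Real.rpow_le_rpow (abs_nonneg _) (h i) hq0.le
  have hglob : ∀ ω, g ω₀ ≤ g ω := by
    intro ω
    rcases le_or_gt A ω with h1 | h1
    · rcases le_or_gt ω B with h2 | h2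
      · exact hω₀ ⟨h1, h2⟩
      · refine le_trans (hω₀ ⟨hAB, le_rfl⟩) (hmono B ω fun i => ?_)
        have hvB : v i ≤ B := Finset.le_sup' _ (Finset.mem_univ i)
        rw [abs_of_nonpos (by linarith), abs_of_nonpos (by linarith)]
        linarith
    · refine le_trans (hω₀ ⟨le_rfl, hAB⟩) (hmono A ω fun i => ?_)
      have hvA : A ≤ v i := Finset.inf'_le _ (Finset.mem_univ i)
      rw [abs_of_nonneg (by linarith), abs_of_nonneg (by linarith)]
      linarith
  -- first-order condition at the minimizer
  set u : Fin n → ℝ := fun i => v i - ω₀ with hu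
  have hD : HasDerivAt g (∑ i, q * (SignType.sign (u i) : ℝ) * |u i| ^ (q - 1) * (-1)) ω₀ := by
    apply HasDerivAt.fun_sum
    intro i _
    exact (hasDerivAt_abs_rpow' hq (u i)).comp ω₀ ((hasDerivAt_id ω₀).const_sub (v i))
  have hS : ∑ i, (SignType.sign (u i) : ℝ) * |u i| ^ (q - 1) = 0 := by
    have hloc : IsLocalMin g ω₀ := Filter.Eventually.of_forall hglob
    have h0 := hloc.hasDerivAt_eq_zero hD
    have h1 : (-q) * ∑ i, (SignType.sign (u i) : ℝ) * |u i| ^ (q - 1) = 0 := by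
      rw [← h0, Finset.mul_sum]
      exact Finset.sum_congr rfl fun i _ => by ring
    rcases mul_eq_zero.mp h1 with h | h
    · exact absurd h (by intro h'; linarith [neg_eq_zero.mp h'])
    · exact h
  set K := ∑ i, |u i| ^ q with hK
  have hKg : K = g ω₀ := rfl
  have hK0 : 0 ≤ K := Finset.sum_nonneg fun i _ => Real.rpow_nonneg (abs_nonneg _) q
  have hpn : ∀ (r : ℝ) (w : Fin n → ℝ), 0 ≤ pnorm r w := fun r w =>
    Real.rpow_nonneg (Finset.sum_nonneg fun i _ => Real.rpow_nonneg (abs_nonneg _) _) _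
  have hbdd : BddBelow (Set.range fun ω : ℝ => pnorm q fun i => v i - ω) := by
    refine ⟨0, ?_⟩
    rintro x ⟨ω, rfl⟩
    exact hpn _ _
  have hκ : (⨅ ω : ℝ, pnorm q fun i => v i - ω) = K ^ (1/q) := by
    refine le_antisymm (ciInf_le hbdd ω₀) (le_ciInf fun ω => ?_)
    exact Real.rpow_le_rpow hK0 (hglob ω) (by positivity)
  have habs_pow : ∀ t : ℝ, |t| ^ (q-1) * |t| = |t| ^ q := by
    intro t
    rcases eq_or_ne t 0 with rfl | h
    · simp [Real.zero_rpow (show q - 1 ≠ 0 by linarith), Real.zero_rpow hq0.ne']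
    · rw [← Real.rpow_add_one (abs_ne_zero.2 h) (q - 1)]
      ring_nf
  constructor
  · -- membership
    by_cases hKz : K = 0
    · have hκ0 : (⨅ ω : ℝ, pnorm q fun i => v i - ω) = 0 := by
        rw [hκ, hKz, Real.zero_rpow (by positivity : 1/q ≠ 0)]
      refine ⟨-α, 0, ?_, by simp, ?_, ?_⟩
      · rw [abs_neg, abs_of_nonneg hα]
      · simp only [pnorm, Pi.zero_apply, abs_zero, Real.zero_rpow hp0.ne', Finset.sum_const,
          smul_zero, Real.zero_rpow (by positivity : 1/p ≠ 0)]
        exact hβ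
      · rw [hκ0]
        simp only [Pi.zero_apply, add_zero]
        ring
    · have hKpos : 0 < K := lt_of_le_of_ne hK0 (Ne.symm hKz)
      set c := K ^ (1/p) with hc
      have hcpos : 0 < c := Real.rpow_pos_of_pos hKpos _
      set ph : Fin n → ℝ := fun i => -(β / c) * ((SignType.sign (u i) : ℝ) * |u i| ^ (q - 1))
        with hph
      have key1 : ∀ i, |(SignType.sign (u i) : ℝ) * |u i| ^ (q-1)| ^ p = |u i| ^ q := by
        intro i
        rcases eq_or_ne (u i) 0 with h | h
        · simp [h, Real.zero_rpow (show q - 1 ≠ 0 by linarith), Real.zero_rpow hq0.ne',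
            Real.zero_rpow hp0.ne']
        · have hsgn : |(SignType.sign (u i) : ℝ)| = 1 := by
            rcases lt_or_gt_of_ne h with h' | h'
            · simp [_root_.sign_neg h']
            · simp [sign_pos h']
          rw [abs_mul, hsgn, one_mul, abs_of_nonneg (Real.rpow_nonneg (abs_nonneg _) _),
            ← Real.rpow_mul (abs_nonneg _), hqp]
      have key2 : ∀ i, (SignType.sign (u i) : ℝ) * |u i| ^ (q-1) * u i = |u i| ^ q := by
        intro i
        rw [mul_right_comm, sign_mul_self, mul_comm, habs_pow]
      refine ⟨-α, ph, ?_, ?_, ?_, ?_⟩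
      · rw [abs_neg, abs_of_nonneg hα]
      · simp only [hph, ← Finset.mul_sum, hS, mul_zero]
      · have hsum : ∑ i, |ph i| ^ p = β ^ p := by
          have : ∀ i, |ph i| ^ p = (β / c) ^ p * |u i| ^ q := by
            intro i
            rw [hph]
            rw [abs_mul, abs_neg, abs_of_nonneg (by positivity : 0 ≤ β / c),
              Real.mul_rpow (by positivity) (abs_nonneg _), key1]
          rw [Finset.sum_congr rfl fun i _ => this i, ← Finset.mul_sum, ← hK,
            Real.div_rpow hβ hcpos.le, hc, ← Real.rpow_mul hK0,
            one_div_mul_cancel hp0.ne', Real.rpow_one, div_mul_cancel₀ _ hKz]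
        rw [pnorm, hsum, ← Real.rpow_mul hβ, mul_one_div_cancel hp0.ne', Real.rpow_one]
      · rw [hκ]
        have hphv : ∑ i, ph i * v i = -(β * K ^ (1/q)) := by
          have hv : ∀ i, v i = u i + ω₀ := fun i => by simp [hu]
          have expand : ∑ i, ph i * v i = ∑ i, ph i * u i + ω₀ * ∑ i, ph i := by
            rw [Finset.mul_sum, ← Finset.sum_add_distrib]
            exact Finset.sum_congr rfl fun i _ => by rw [hv i]; ring
          have hphs : ∑ i, ph i = 0 := by
            simp only [hph, ← Finset.mul_sum, hS, mul_zero]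
          have hterm : ∀ i, ph i * u i = -(β / c) * |u i| ^ q := by
            intro i
            rw [hph, mul_assoc, key2]
          rw [expand, hphs, mul_zero, add_zero,
            Finset.sum_congr rfl fun i _ => hterm i, ← Finset.mul_sum, ← hK]
          have hKc : K / c = K ^ (1/q) := by
            rw [hc]
            nth_rewrite 1 [show K = K ^ (1:ℝ) from (Real.rpow_one K).symm]
            rw [← Real.rpow_sub hKpos, show (1:ℝ) - 1/p = 1/q by linarith]
          have hfin : β / c * K = β * K ^ (1/q) := by
            rw [div_mul_eq_mul_div, mul_div_assoc, hKc]
          linear_combination -hfin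
        have hsplit : ∑ i, (P0 i + ph i) * v i = ∑ i, P0 i * v i + ∑ i, ph i * v i := by
          rw [← Finset.sum_add_distrib]
          exact Finset.sum_congr rfl fun i _ => by ring
        rw [hsplit, hphv]
        ring
  · rintro x ⟨r, ph, hr, hsum, hnorm, rfl⟩
    have hph : ∀ ω : ℝ, -∑ i, ph i * v i ≤ β * pnorm q (fun i => v i - ω) := by
      intro ω
      have h1 : -∑ i, ph i * v i = ∑ i, (-ph i) * (v i - ω) := by
        have expand : ∑ i, (-ph i) * (v i - ω) = ∑ i, (-(ph i * v i)) + ∑ i, ω * ph i := by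
          rw [← Finset.sum_add_distrib]
          exact Finset.sum_congr rfl fun i _ => by ring
        rw [expand, Finset.sum_neg_distrib, ← Finset.mul_sum, hsum, mul_zero, add_zero]
      rw [h1]
      calc ∑ i, (-ph i) * (v i - ω)
          ≤ (∑ i, |(-ph i)| ^ p) ^ (1/p) * (∑ i, |v i - ω| ^ q) ^ (1/q) :=
            Real.inner_le_Lp_mul_Lq Finset.univ _ _ hpq'
        _ = pnorm p ph * pnorm q (fun i => v i - ω) := by
            simp only [pnorm, abs_neg]
        _ ≤ β * pnorm q (fun i => v i - ω) :=
            mul_le_mul_of_nonneg_right hnorm (hpn _ _)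
    have hph2 : -∑ i, ph i * v i ≤ β * ⨅ ω : ℝ, pnorm q fun i => v i - ω := by
      rw [Real.mul_iInf_of_nonneg hβ]
      exact le_ciInf hph
    have hr' : -α ≤ r := neg_le_of_abs_le hr
    have hsplit : ∑ i, (P0 i + ph i) * v i = ∑ i, P0 i * v i + ∑ i, ph i * v i := by
      rw [← Finset.sum_add_distrib]
      exact Finset.sum_congr rfl fun i _ => by ring
    have hmul := mul_le_mul_of_nonneg_left hph2 hγ
    rw [mul_neg, ← mul_assoc] at hmul
    rw [hsplit, mul_add]
    linarith
end

section
/- Let v ∈ ℝⁿ with κ_q(v) > 0 and minimizer ω_q(v), let P₀ ∈ Δⁿ be a probability vector, β ≥ 0, 1 < p < ∞ with conjugate q, and define u(s) := sign(v(s)-ω_q(v))|v(s)-ω_q(v)|^{q-1}/κ_q(v)^{q-1}. Then p* := -β·u is an optimal solution of min over p̂ ∈ ℝⁿ with ⟨p̂,𝟏⟩ = 0 and ‖p̂‖_p ≤ β of ⟨P₀ + p̂, v⟩, and the optimal value is ⟨P₀, v⟩ - β·κ_q(v). -/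
lemma abs_rpow_hasDerivAt {q : ℝ} (hq : 1 < q) (x : ℝ) :
    HasDerivAt (fun y : ℝ => |y| ^ q) (q * Real.sign x * |x| ^ (q - 1)) x := by
  rcases lt_trichotomy x 0 with hx | rfl | hx
  · have h : HasDerivAt (fun y : ℝ => (-y) ^ q) (q * (-x) ^ (q - 1) * (-1)) x :=
      (Real.hasDerivAt_rpow_const (p := q) (Or.inl (by linarith))).comp x
        ((hasDerivAt_id x).neg)
    have heq : (fun y : ℝ => |y| ^ q) =ᶠ[nhds x] fun y : ℝ => (-y) ^ q := by
      filter_upwards [Iio_mem_nhds hx] with y (hy : y < 0)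
      rw [abs_of_neg hy]
    have := h.congr_of_eventuallyEq heq
    refine this.congr_deriv ?_
    rw [Real.sign_of_neg hx, abs_of_neg hx]; ring
  · simp only [Real.sign_zero, mul_zero, zero_mul]
    rw [hasDerivAt_iff_tendsto_slope]
    have h1 : Filter.Tendsto (fun y : ℝ => |y| ^ (q - 1)) (nhdsWithin 0 {(0:ℝ)}ᶜ) (nhds 0) := by
      have hc : Filter.Tendsto (fun y : ℝ => |y| ^ (q - 1)) (nhds 0) (nhds (|(0:ℝ)| ^ (q - 1))) :=
        ((Real.continuousAt_rpow_const _ _ (Or.inr (by linarith))).comp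
          continuous_abs.continuousAt).tendsto
      rw [abs_zero, Real.zero_rpow (by linarith)] at hc
      exact hc.mono_left nhdsWithin_le_nhds
    apply squeeze_zero_norm' _ h1
    filter_upwards [self_mem_nhdsWithin] with y (hy : y ≠ 0)
    have : slope (fun y : ℝ => |y| ^ q) 0 y = |y| ^ q / y := by
      simp [slope_def_field, abs_zero, Real.zero_rpow (by linarith : q ≠ 0)]
    rw [this, Real.norm_eq_abs, abs_div, Real.abs_rpow_of_nonneg (abs_nonneg y),
      abs_abs, Real.rpow_sub (abs_pos.mpr hy), Real.rpow_one]
  · have h : HasDerivAt (fun y : ℝ => y ^ q) (q * x ^ (q - 1)) x :=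
      Real.hasDerivAt_rpow_const (p := q) (Or.inl (by linarith))
    have heq : (fun y : ℝ => |y| ^ q) =ᶠ[nhds x] fun y : ℝ => y ^ q := by
      filter_upwards [Ioi_mem_nhds hx] with y (hy : 0 < y)
      rw [abs_of_pos hy]
    have := h.congr_of_eventuallyEq heq
    refine this.congr_deriv ?_
    rw [Real.sign_of_pos hx, abs_of_pos hx]; ring

lemma sign_mul_rpow_mul_self (x : ℝ) {r : ℝ} (hr : 0 < r) :
    Real.sign x * |x| ^ r * x = |x| ^ (r + 1) := by
  rcases lt_trichotomy x 0 with hx | rfl | hx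
  · rw [Real.sign_of_neg hx, abs_of_neg hx,
      Real.rpow_add_one (by linarith : -x ≠ 0)]; ring
  · simp [Real.zero_rpow (by linarith : r + 1 ≠ 0)]
  · rw [Real.sign_of_pos hx, abs_of_pos hx, Real.rpow_add_one (by linarith : x ≠ 0)]; ring

lemma abs_sign_mul_rpow (x : ℝ) {r : ℝ} (hr : 0 < r) :
    |Real.sign x * |x| ^ r| = |x| ^ r := by
  rcases lt_trichotomy x 0 with hx | rfl | hx
  · rw [Real.sign_of_neg hx, neg_one_mul, abs_neg,
      abs_of_nonneg (Real.rpow_nonneg (abs_nonneg x) r)]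
  · simp [Real.zero_rpow hr.ne']
  · rw [Real.sign_of_pos hx, one_mul, abs_of_nonneg (Real.rpow_nonneg (abs_nonneg x) r)]

theorem stmt16 {n : ℕ} (v : Fin n → ℝ) (p q : ℝ) (hp : 1 < p) (hpq : 1 / p + 1 / q = 1)
    (ω : ℝ) (hω : ∀ w : ℝ, pnorm q (fun i => v i - ω) ≤ pnorm q fun i => v i - w)
    (hκ : 0 < pnorm q fun i => v i - ω)
    (P0 : Fin n → ℝ) (hP0 : ∀ i, 0 ≤ P0 i) (hPs : ∑ i, P0 i = 1)
    (β : ℝ) (hβ : 0 ≤ β) :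
    let κ : ℝ := pnorm q fun i => v i - ω
    let u : Fin n → ℝ := fun i => Real.sign (v i - ω) * |v i - ω| ^ (q - 1) / κ ^ (q - 1)
    let ps : Fin n → ℝ := fun i => -β * u i
    (∑ i, ps i) = 0 ∧ pnorm p ps ≤ β ∧
    (∑ i, (P0 i + ps i) * v i) = (∑ i, P0 i * v i) - β * κ ∧
    ∀ ph : Fin n → ℝ, (∑ i, ph i) = 0 → pnorm p ph ≤ β →
      (∑ i, P0 i * v i) - β * κ ≤ ∑ i, (P0 i + ph i) * v i := by
  intro κ u ps
  have hp0 : 0 < p := by linarith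
  have hq0 : 0 < q := by
    rcases lt_trichotomy q 0 with h | h | h
    · have h1 : 1 / p > 0 := by positivity
      have h2 : 1 / q < 0 := by exact div_neg_of_pos_of_neg one_pos h
      have h3 : 1 / p < 1 := by
        rw [div_lt_one hp0]; exact hp
      linarith
    · rw [h] at hpq; simp at hpq
      have : 1 / p < 1 := by rw [div_lt_one hp0]; exact hp
      linarith
    · exact h
  have hq : 1 < q := by
    have h3 : 1 / p > 0 := by positivity
    have : 1 / q < 1 := by linarith
    rwa [div_lt_one hq0] at this
  have hqp : (q - 1) * p = q := by
    have h1 : p ≠ 0 := hp0.ne'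
    have h2 : q ≠ 0 := hq0.ne'
    field_simp at hpq
    nlinarith [hpq]
  set w : Fin n → ℝ := fun i => v i - ω with hw
  have hκpos : 0 < κ := hκ
  have hκq1 : 0 < κ ^ (q - 1) := Real.rpow_pos_of_pos hκpos _
  have hSnn : 0 ≤ ∑ i, |w i| ^ q :=
    Finset.sum_nonneg fun i _ => Real.rpow_nonneg (abs_nonneg _) _
  have hS : ∑ i, |w i| ^ q = κ ^ q := by
    have : κ = (∑ i, |w i| ^ q) ^ (1 / q) := rfl
    rw [this, ← Real.rpow_mul hSnn, one_div_mul_cancel hq0.ne', Real.rpow_one]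
  -- Step A : sum of signs is zero
  have sumS : ∑ i, Real.sign (w i) * |w i| ^ (q - 1) = 0 := by
    set g : ℝ → ℝ := fun t => ∑ i, |v i - t| ^ q with hg
    have hmin : ∀ t, g ω ≤ g t := by
      intro t
      by_contra hlt
      push_neg at hlt
      have h2 : (g t) ^ (1 / q) < (g ω) ^ (1 / q) :=
        Real.rpow_lt_rpow (Finset.sum_nonneg fun i _ => Real.rpow_nonneg (abs_nonneg _) _)
          hlt (by positivity)
      have h1 := hω t
      simp only [pnorm] at h1
      exact absurd h1 (not_le.mpr h2)
    have hderiv : HasDerivAt g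
        (∑ i, q * Real.sign (v i - ω) * |v i - ω| ^ (q - 1) * (-1)) ω := by
      apply HasDerivAt.fun_sum
      intro i _
      exact (abs_rpow_hasDerivAt hq (v i - ω)).comp ω
        (HasDerivAt.const_sub (v i) (hasDerivAt_id ω))
    have hlm : IsLocalMin g ω := Filter.Eventually.of_forall hmin
    have hzero := hlm.hasDerivAt_eq_zero hderiv
    have h3 : ∑ i, q * Real.sign (v i - ω) * |v i - ω| ^ (q - 1) * (-1)
        = -(q * ∑ i, Real.sign (w i) * |w i| ^ (q - 1)) := by
      rw [Finset.mul_sum, ← Finset.sum_neg_distrib]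
      exact Finset.sum_congr rfl fun i _ => by simp [hw]; ring
    rw [h3, neg_eq_zero] at hzero
    exact (mul_eq_zero.mp hzero).resolve_left hq0.ne'
  -- the pieces
  have hu : ∀ i, u i = Real.sign (w i) * |w i| ^ (q - 1) / κ ^ (q - 1) := fun i => rfl
  have sumU : ∑ i, u i = 0 := by
    simp only [hu, div_eq_mul_inv, ← Finset.sum_mul, sumS, zero_mul]
  have habsu : ∀ i, |u i| ^ p = |w i| ^ q / κ ^ q := by
    intro i
    have h1 : |u i| = |w i| ^ (q - 1) / κ ^ (q - 1) := by
      rw [hu, abs_div, abs_of_pos hκq1, abs_sign_mul_rpow _ (by linarith : (0:ℝ) < q - 1)]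
    rw [h1, Real.div_rpow (Real.rpow_nonneg (abs_nonneg _) _) hκq1.le,
      ← Real.rpow_mul (abs_nonneg _), ← Real.rpow_mul hκpos.le, hqp]
  -- the inner product ⟨u, v⟩ = κ
  have huv : ∑ i, u i * v i = κ := by
    have h1 : ∀ i, u i * v i = u i * w i + ω * u i := by
      intro i; simp only [hw]; ring
    have h2 : ∀ i, u i * w i = |w i| ^ q / κ ^ (q - 1) := by
      intro i
      rw [hu]
      have := sign_mul_rpow_mul_self (w i) (by linarith : (0:ℝ) < q - 1)
      rw [sub_add_cancel] at this
      rw [div_mul_eq_mul_div, this]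
    calc ∑ i, u i * v i = ∑ i, (u i * w i + ω * u i) := Finset.sum_congr rfl fun i _ => h1 i
      _ = (∑ i, u i * w i) + ω * ∑ i, u i := by rw [Finset.sum_add_distrib, Finset.mul_sum]
      _ = ∑ i, |w i| ^ q / κ ^ (q - 1) := by
          rw [sumU, mul_zero, add_zero]
          exact Finset.sum_congr rfl fun i _ => h2 i
      _ = (∑ i, |w i| ^ q) / κ ^ (q - 1) := by rw [Finset.sum_div]
      _ = κ ^ q / κ ^ (q - 1) := by rw [hS]
      _ = κ := by rw [← Real.rpow_sub hκpos]; simp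
  refine ⟨?_, ?_, ?_, ?_⟩
  · -- sum ps = 0
    simp only [ps, ← Finset.mul_sum, sumU, mul_zero]
  · -- pnorm p ps ≤ β
    have h1 : ∀ i, |ps i| ^ p = β ^ p * (|w i| ^ q / κ ^ q) := by
      intro i
      have : |ps i| = β * |u i| := by
        simp only [ps, abs_mul, abs_neg, abs_of_nonneg hβ]
      rw [this, Real.mul_rpow hβ (abs_nonneg _), habsu]
    have h2 : pnorm p ps = β := by
      simp only [pnorm, h1, ← Finset.mul_sum, ← Finset.sum_div, hS, div_self
        (ne_of_gt (Real.rpow_pos_of_pos hκpos q)), mul_one]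
      rw [← Real.rpow_mul hβ, mul_one_div_cancel hp0.ne', Real.rpow_one]
    exact h2.le
  · -- optimal value
    have : ∑ i, (P0 i + ps i) * v i = (∑ i, P0 i * v i) + (-β) * ∑ i, u i * v i := by
      rw [Finset.mul_sum, ← Finset.sum_add_distrib]
      refine Finset.sum_congr rfl fun i _ => ?_
      simp only [ps]; ring
    rw [this, huv]; ring
  · -- optimality
    intro ph hsum hnorm
    have hconj : Real.HolderConjugate p q := Real.holderConjugate_iff.mpr ⟨hp, by simpa [one_div] using hpq⟩
    have holder := Real.inner_le_Lp_mul_Lq (s := Finset.univ) (f := fun i => -ph i) (g := w) hconj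
    simp only [abs_neg] at holder
    have hκdef : (∑ i, |w i| ^ q) ^ (1 / q) = κ := rfl
    rw [hκdef] at holder
    have hb : (∑ i, |ph i| ^ p) ^ (1 / p) * κ ≤ β * κ :=
      mul_le_mul_of_nonneg_right hnorm hκpos.le
    have key : -(β * κ) ≤ ∑ i, ph i * w i := by
      have h1 : ∑ i, -ph i * w i ≤ β * κ := le_trans holder hb
      have h2 : ∑ i, -ph i * w i = -(∑ i, ph i * w i) := by
        rw [← Finset.sum_neg_distrib]; exact Finset.sum_congr rfl fun i _ => by ring
      linarith [h1, h2.symm ▸ h1]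
    have h3 : ∑ i, (P0 i + ph i) * v i = (∑ i, P0 i * v i) + ∑ i, ph i * w i := by
      have : ∀ i, (P0 i + ph i) * v i = P0 i * v i + ph i * w i + ω * ph i := by
        intro i; simp only [hw]; ring
      rw [Finset.sum_congr rfl fun i _ => this i, Finset.sum_add_distrib,
        Finset.sum_add_distrib, ← Finset.mul_sum, hsum, mul_zero, add_zero]
    rw [h3]
    linarith [key]
end
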